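/- Let k be an algebraically closed field and 3 ≤ d ≤ n. Let M be a 2n×d matrix over k of rank d with column span U. For i = (i_1 < … < i_{d−2}) ∈ I_{d−2,2n} and 1 ≤ t ≤ n let R(i,t) be the d×d matrix whose rows, in order, are rows i_1, …, i_{d−2}, t, n+t of M (so det R(i,t) = 0 whenever t or n+t occurs among the i_l). Then U is isotropic if and only if Σ_{t=1}^n det R(i,t) = 0 for every i ∈ I_{d−2,2n}. (This is the d ≥ 3 case of Theorem 4.4: U ∈ Sp_{2n}(k)/P_d ⊆ G_{d,2n} if and only if U is annihilated by all Σ_{t=1}^n (−1)^{τ(i_1,…,i_{d−2},t,n+t)} p_{(i_1,…,i_{d−2},t,n+t)}.) -/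

import Mathlib

open Matrix BigOperators

/-- The standard symplectic matrix `J = [[0, -Iₙ],[Iₙ, 0]]` of size `2n × 2n`. -/
def Jmat (k : Type*) [Field k] (n : ℕ) : Matrix (Fin (2*n)) (Fin (2*n)) k :=
  Matrix.of fun a b => if a.1 + n = b.1 then (-1 : k) else if b.1 + n = a.1 then 1 else 0

/-- A subspace `U ⊆ k^{2n}` is isotropic if `uᵀ J w = 0` for all `u, w ∈ U`. -/
def IsIsotropic (k : Type*) [Field k] (n : ℕ) (U : Submodule k (Fin (2*n) → k)) : Prop :=
  ∀ u ∈ U, ∀ w ∈ U, u ⬝ᵥ (Jmat k n).mulVec w = 0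

/-- `Kspace k n a` is the subspace `K_a` (with `a` a 1-indexed index in `{0,…,2n}`):
`K_0 = 0`, `K_a = span(e_1,…,e_a)` for `1 ≤ a ≤ n`, and
`K_{n+i} = span(e_1,…,e_n, e_{n+i},…,e_{2n})` for `1 ≤ i ≤ n`. -/
def Kspace (k : Type*) [Field k] (n : ℕ) (a : ℕ) : Submodule k (Fin (2*n) → k) :=
  Submodule.span k
    {v | ∃ p : Fin (2*n), ((p.1 < a ∧ p.1 < n) ∨ (n < a ∧ a ≤ p.1 + 1)) ∧ v = Pi.single p 1}

/-- `σ` on 1-indexed `{1,…,2n}`: `σ(a) = a-1` for `a ≤ n`, `σ(a) = a+1` for `n < a < 2n`,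
`σ(2n) = n`. -/
def sigmaFn (n a : ℕ) : ℕ := if a ≤ n then a - 1 else if a < 2*n then a + 1 else n

/-- Membership in `\overline{I}^{Sp}_{d,2n}` (0-indexed entries): a `d`-tuple of pairwise
distinct elements of `Fin (2n)` such that for some `r ≤ d`, the first `r` entries are
strictly increasing with (1-indexed) values `≤ n` and the remaining entries are strictly
decreasing with (1-indexed) values `> n`. -/
def IsSpBarTuple (n : ℕ) {d : ℕ} (i : Fin d → Fin (2*n)) : Prop :=
  Function.Injective i ∧ ∃ r ≤ d,
    (∀ a b : Fin d, a < b → b.1 < r → i a < i b) ∧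
    (∀ a : Fin d, a.1 < r → (i a).1 < n) ∧
    (∀ a b : Fin d, a < b → r ≤ a.1 → i b < i a) ∧
    (∀ a : Fin d, r ≤ a.1 → n ≤ (i a).1)

/-- Membership in `I^{Sp}_{d,2n}`: a tuple of `\overline{I}^{Sp}_{d,2n}` whose entries
contain no pair `{t, n+t}`. -/
def IsSpTuple (n : ℕ) {d : ℕ} (i : Fin d → Fin (2*n)) : Prop :=
  IsSpBarTuple n i ∧ ∀ a b : Fin d, (i b).1 ≠ (i a).1 + n

/-- The order `i ≥^{Sp} j`: for every `t`, `i_t ≥ j_t` if `j_t ≤ n` (1-indexed), and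
`n < i_t ≤ j_t` if `j_t > n`. -/
def spGE (n : ℕ) {d : ℕ} (i j : Fin d → Fin (2*n)) : Prop :=
  ∀ t : Fin d, if (j t).1 < n then j t ≤ i t else (n ≤ (i t).1 ∧ i t ≤ j t)

/-- The coordinate subspace `e_i = span(e_{i_1},…,e_{i_d})`. -/
def eSpan (k : Type*) [Field k] {n d : ℕ} (i : Fin d → Fin (2*n)) :
    Submodule k (Fin (2*n) → k) :=
  Submodule.span k (Set.range fun t => Pi.single (i t) (1 : k))

/-- The Borel subgroup `B` of `Sp_{2n}(k)`: symplectic matrices of block form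
`[[A, B'],[0, D]]` with `A` upper triangular. -/
def inB (k : Type*) [Field k] (n : ℕ) (M : Matrix (Fin (2*n)) (Fin (2*n)) k) : Prop :=
  Mᵀ * Jmat k n * M = Jmat k n ∧
  ∀ a b : Fin (2*n), ((n ≤ a.1 ∧ b.1 < n) ∨ (a.1 < n ∧ b.1 < n ∧ b.1 < a.1)) → M a b = 0

/-- The opposite Borel subgroup `B⁻` of `Sp_{2n}(k)`: symplectic matrices of block form
`[[A, 0],[C, D]]` with `A` lower triangular. -/
def inBminus (k : Type*) [Field k] (n : ℕ) (M : Matrix (Fin (2*n)) (Fin (2*n)) k) : Prop :=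
  Mᵀ * Jmat k n * M = Jmat k n ∧
  ∀ a b : Fin (2*n), ((a.1 < n ∧ n ≤ b.1) ∨ (a.1 < n ∧ b.1 < n ∧ a.1 < b.1)) → M a b = 0

/-- The Plücker coordinate `p_S(M)`: determinant of the `d×d` submatrix of `M` formed by
the rows in `S` taken in increasing order (and `0` if `S` does not have `d` elements). -/
def pluckerS {k : Type*} [Field k] {n d : ℕ} (M : Matrix (Fin (2*n)) (Fin d) k)
    (S : Finset (Fin (2*n))) : k :=
  if hS : S.card = d then
    (M.submatrix (fun a => (S.orderIsoOfFin hS a : Fin (2*n))) id).det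
  else 0

/-- The Plücker coordinate attached to the underlying set of a tuple `j`. -/
def pluckerT {k : Type*} [Field k] {n d : ℕ} (M : Matrix (Fin (2*n)) (Fin d) k)
    (j : Fin d → Fin (2*n)) : k :=
  pluckerS M (Finset.image j Finset.univ)

/-- The row-selection function for `R(i,t)`: rows `i_1, …, i_{d-2}, t, n+t` in order. -/
def rowsFn {n : ℕ} (d : ℕ) (i : Fin (d-2) → Fin (2*n)) (t : Fin n) : Fin d → Fin (2*n) :=
  fun l =>
    if h : l.1 < d - 2 then i ⟨l.1, h⟩
    else if l.1 = d - 2 then ⟨t.1, by have := t.2; omega⟩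
    else ⟨n + t.1, by have := t.2; omega⟩

/-- The column-selection function enumerating, in increasing order, the columns of a
`2n × d` matrix other than `j1 < j2`. -/
def colSkip (d : ℕ) (j1 j2 : Fin d) (c : Fin (d-2)) : Fin d :=
  if c.1 < j1.1 then ⟨c.1, by have := c.2; omega⟩
  else if c.1 + 1 < j2.1 then ⟨c.1 + 1, by have := c.2; omega⟩
  else ⟨c.1 + 2, by have := c.2; omega⟩

/-- Membership of a subspace `U` in the Richardson variety `R(u,v)` of `Sp_{2n}(k)/P_d`:
`U` is a `d`-dimensional isotropic subspace with `dim(U ∩ K_{u_t}) ≥ t` and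
`dim(U ∩ K_{σ(v_t)}) ≤ t-1` for all `1 ≤ t ≤ d`. -/
def inRich (k : Type*) [Field k] (n : ℕ) {d : ℕ} (u v : Fin d → Fin (2*n))
    (U : Submodule k (Fin (2*n) → k)) : Prop :=
  IsIsotropic k n U ∧ Module.finrank k U = d ∧
  ∀ t : Fin d,
    t.1 + 1 ≤ Module.finrank k ↥(U ⊓ Kspace k n ((u t).1 + 1)) ∧
    Module.finrank k ↥(U ⊓ Kspace k n (sigmaFn n ((v t).1 + 1))) ≤ t.1

section StmtAux

variable {k : Type*} [Field k] {n d : ℕ}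

def matR (M : Matrix (Fin (2*n)) (Fin d) k) (i : Fin (d-2) → Fin (2*n)) (x y : Fin d → k) :
    Matrix (Fin d) (Fin d) k :=
  Matrix.of fun l c => if h : l.1 < d-2 then M (i ⟨l.1, h⟩) c else if l.1 = d-2 then x c else y c

def Smat (M : Matrix (Fin (2*n)) (Fin d) k) : Matrix (Fin d) (Fin d) k :=
  Matrix.of fun a b => ∑ t : Fin n,
    M ⟨t.1, by have := t.2; omega⟩ a * M ⟨n + t.1, by have := t.2; omega⟩ b

lemma matR_eq_update (hd : 3 ≤ d) (M : Matrix (Fin (2*n)) (Fin d) k)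
    (i : Fin (d-2) → Fin (2*n)) (x y : Fin d → k) :
    matR M i x y = ((matR M i 0 0).updateRow ⟨d-2, by omega⟩ x).updateRow ⟨d-1, by omega⟩ y := by
  have hne : d - 2 ≠ d - 1 := by omega
  funext l c
  simp only [matR, Matrix.of_apply, Matrix.updateRow_apply]
  rcases lt_trichotomy l.1 (d-2) with h | h | h
  · have h1 : l ≠ (⟨d-1, by omega⟩ : Fin d) := by
      intro he; rw [Fin.ext_iff] at he; simp at he; omega
    have h2 : l ≠ (⟨d-2, by omega⟩ : Fin d) := by
      intro he; rw [Fin.ext_iff] at he; simp at he; omega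
    simp [h1, h2, h]
  · have h2 : l = (⟨d-2, by omega⟩ : Fin d) := Fin.ext h
    have h1 : l ≠ (⟨d-1, by omega⟩ : Fin d) := by
      intro he; rw [Fin.ext_iff] at he; simp at he; omega
    simp [h1, h2, h, hne]
  · have h2 : l = (⟨d-1, by omega⟩ : Fin d) := by
      have := l.2; rw [Fin.ext_iff]; simp; omega
    have h3 : ¬ (d - 1 < d - 2) := by omega
    simp [h2, h3, hne]
    intro he; exact absurd he (by omega)

lemma myUpdateRow_comm {A : Matrix (Fin d) (Fin d) k} {j₁ j₂ : Fin d} (h : j₁ ≠ j₂)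
    (x y : Fin d → k) :
    (A.updateRow j₁ x).updateRow j₂ y = (A.updateRow j₂ y).updateRow j₁ x := by
  funext l c
  simp only [Matrix.updateRow_apply]
  rcases eq_or_ne l j₁ with rfl | h1 <;> rcases eq_or_ne l j₂ with rfl | h2 <;>
    simp_all

lemma det_updateRow_fin_sum {ι : Type*} (s : Finset ι) (A : Matrix (Fin d) (Fin d) k)
    (j : Fin d) (f : ι → Fin d → k) :
    (A.updateRow j (∑ a ∈ s, f a)).det = ∑ a ∈ s, (A.updateRow j (f a)).det := by
  classical
  induction s using Finset.induction_on with
  | empty =>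
      rw [Finset.sum_empty, Finset.sum_empty]
      exact Matrix.det_eq_zero_of_row_eq_zero j (fun c => by simp)
  | insert a s' hk ih =>
                    rw [Finset.sum_insert hk, Matrix.det_updateRow_add, ih, Finset.sum_insert hk]

lemma det_updateRow_expand (A : Matrix (Fin d) (Fin d) k) (j : Fin d) (x : Fin d → k) :
    (A.updateRow j x).det = ∑ a : Fin d, x a * (A.updateRow j (Pi.single a 1)).det := by
  have hx : x = ∑ a : Fin d, x a • (Pi.single a 1 : Fin d → k) := by
    funext c
    simp [Finset.sum_apply, Pi.single_apply]
  conv_lhs => rw [hx]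
  rw [det_updateRow_fin_sum]
  exact Finset.sum_congr rfl fun a _ => by rw [Matrix.det_updateRow_smul]

/-- the elementary determinant coefficients -/
def Dco (M : Matrix (Fin (2*n)) (Fin d) k) (i : Fin (d-2) → Fin (2*n)) (a b : Fin d) : k :=
  (matR M i (Pi.single a 1) (Pi.single b 1)).det

lemma det_matR_expand (hd : 3 ≤ d) (M : Matrix (Fin (2*n)) (Fin d) k)
    (i : Fin (d-2) → Fin (2*n)) (x y : Fin d → k) :
    (matR M i x y).det = ∑ a : Fin d, ∑ b : Fin d, x a * y b * Dco M i a b := by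
  have hne : (⟨d-2, by omega⟩ : Fin d) ≠ ⟨d-1, by omega⟩ := by
    rw [Fin.ne_iff_vne]; simp; omega
  rw [matR_eq_update hd, det_updateRow_expand]
  rw [Finset.sum_comm]
  refine Finset.sum_congr rfl fun b _ => ?_
  rw [myUpdateRow_comm hne, det_updateRow_expand, Finset.mul_sum]
  refine Finset.sum_congr rfl fun a _ => ?_
  rw [myUpdateRow_comm hne.symm, ← matR_eq_update hd]
  show y b * (x a * Dco M i a b) = _
  ring

lemma matR_row2 (hd : 3 ≤ d) (M : Matrix (Fin (2*n)) (Fin d) k)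
    (i : Fin (d-2) → Fin (2*n)) (x y : Fin d → k) :
    matR M i x y ⟨d-2, by omega⟩ = x := by
  funext c; simp only [matR, Matrix.of_apply]
  rw [dif_neg (by omega)]; simp

lemma matR_row1 (hd : 3 ≤ d) (M : Matrix (Fin (2*n)) (Fin d) k)
    (i : Fin (d-2) → Fin (2*n)) (x y : Fin d → k) :
    matR M i x y ⟨d-1, by omega⟩ = y := by
  funext c; simp only [matR, Matrix.of_apply]
  rw [dif_neg (by omega), if_neg (by omega)]

lemma matR_rowlt (M : Matrix (Fin (2*n)) (Fin d) k)
    (i : Fin (d-2) → Fin (2*n)) (x y : Fin d → k) (c : Fin (d-2)) :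
    matR M i x y ⟨c.1, by have := c.2; omega⟩ = M (i c) := by
  funext cc; simp only [matR, Matrix.of_apply]
  rw [dif_pos c.2]

lemma matR_diag (hd : 3 ≤ d) (M : Matrix (Fin (2*n)) (Fin d) k)
    (i : Fin (d-2) → Fin (2*n)) (x : Fin d → k) :
    (matR M i x x).det = 0 := by
  refine Matrix.det_zero_of_row_eq (i := ⟨d-2, by omega⟩) (j := ⟨d-1, by omega⟩) ?_ ?_
  · rw [Fin.ne_iff_vne]; simp; omega
  · rw [matR_row2 hd, matR_row1 hd]

lemma matR_swap (hd : 3 ≤ d) (M : Matrix (Fin (2*n)) (Fin d) k)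
    (i : Fin (d-2) → Fin (2*n)) (x y : Fin d → k) :
    (matR M i y x).det = - (matR M i x y).det := by
  have hne : (⟨d-2, by omega⟩ : Fin d) ≠ ⟨d-1, by omega⟩ := by
    rw [Fin.ne_iff_vne]; simp; omega
  have hperm : matR M i y x =
      (matR M i x y).submatrix (Equiv.swap ⟨d-2, by omega⟩ ⟨d-1, by omega⟩) id := by
    funext l c
    simp only [Matrix.submatrix_apply, id_eq]
    rcases lt_trichotomy l.1 (d-2) with h | h | h
    · have h1 : l ≠ (⟨d-1, by omega⟩ : Fin d) := by
        rw [Fin.ne_iff_vne]; simp; omega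
      have h2 : l ≠ (⟨d-2, by omega⟩ : Fin d) := by
        rw [Fin.ne_iff_vne]; simp; omega
      rw [Equiv.swap_apply_of_ne_of_ne h2 h1]
      simp only [matR, Matrix.of_apply]; rw [dif_pos h, dif_pos h]
    · have h2 : l = (⟨d-2, by omega⟩ : Fin d) := Fin.ext h
      rw [h2, Equiv.swap_apply_left, matR_row1 hd, matR_row2 hd]
    · have h2 : l = (⟨d-1, by omega⟩ : Fin d) := by
        have := l.2; rw [Fin.ext_iff]; simp; omega
      rw [h2, Equiv.swap_apply_right, matR_row2 hd, matR_row1 hd]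
  rw [hperm, Matrix.det_permute, Equiv.Perm.sign_swap hne]
  simp
lemma sum_split (f : Fin (2*n) → k) :
    ∑ p, f p = ∑ t : Fin n, f ⟨t.1, by have := t.2; omega⟩
      + ∑ t : Fin n, f ⟨n + t.1, by have := t.2; omega⟩ := by
  have h2 : ∑ p, f p = ∑ p : Fin (n+n), f (Fin.cast (two_mul n).symm p) :=
    (Fintype.sum_bijective (Fin.cast (two_mul n).symm) ((finCongr (two_mul n).symm).bijective)
      _ f (fun p => rfl)).symm
  rw [h2, Fin.sum_univ_add (fun p : Fin (n+n) => f (Fin.cast (two_mul n).symm p))]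
  congr 1

lemma JM_apply (M : Matrix (Fin (2*n)) (Fin d) k) (p : Fin (2*n)) (b : Fin d) :
    (Jmat k n * M) p b = if h : p.1 < n then - M ⟨n + p.1, by have := p.2; omega⟩ b
      else M ⟨p.1 - n, by have := p.2; omega⟩ b := by
  rw [Matrix.mul_apply]
  split_ifs with h
  · rw [Finset.sum_eq_single (⟨n + p.1, by have := p.2; omega⟩ : Fin (2*n))]
    · simp only [Jmat, Matrix.of_apply]; rw [if_pos (by omega)]; ring
    · intro q _ hq
      simp only [Jmat, Matrix.of_apply]
      rw [if_neg (by rw [Fin.ne_iff_vne] at hq; simp at hq; omega), if_neg (by omega)]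
      ring
    · intro hc; exact absurd (Finset.mem_univ _) hc
  · rw [Finset.sum_eq_single (⟨p.1 - n, by have := p.2; omega⟩ : Fin (2*n))]
    · simp only [Jmat, Matrix.of_apply]; rw [if_neg (by omega), if_pos (by omega)]; ring
    · intro q _ hq
      simp only [Jmat, Matrix.of_apply]
      rw [if_neg (by have := q.2; omega), if_neg (by rw [Fin.ne_iff_vne] at hq; simp at hq; omega)]
      ring
    · intro hc; exact absurd (Finset.mem_univ _) hc

lemma entry_eq (M : Matrix (Fin (2*n)) (Fin d) k) (a b : Fin d) :
    (Mᵀ * (Jmat k n * M)) a b = Smat M b a - Smat M a b := by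
  rw [Matrix.mul_apply]
  rw [sum_split (fun p => Mᵀ a p * (Jmat k n * M) p b)]
  have e1 : ∑ t : Fin n, Mᵀ a ⟨t.1, by have := t.2; omega⟩
      * (Jmat k n * M) ⟨t.1, by have := t.2; omega⟩ b = - Smat M a b := by
    simp only [Smat, Matrix.of_apply, ← Finset.sum_neg_distrib]
    refine Finset.sum_congr rfl fun t _ => ?_
    rw [Matrix.transpose_apply, JM_apply, dif_pos t.2]
    ring
  have e2 : ∑ t : Fin n, Mᵀ a ⟨n + t.1, by have := t.2; omega⟩
      * (Jmat k n * M) ⟨n + t.1, by have := t.2; omega⟩ b = Smat M b a := by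
    simp only [Smat, Matrix.of_apply]
    refine Finset.sum_congr rfl fun t _ => ?_
    rw [Matrix.transpose_apply, JM_apply, dif_neg (by simp)]
    simp only [show n + t.1 - n = t.1 from by omega]
    ring
  rw [e1, e2]
  ring

lemma iso_iff (M : Matrix (Fin (2*n)) (Fin d) k) :
    IsIsotropic k n (LinearMap.range M.mulVecLin) ↔
      ∀ a b : Fin d, Smat M a b = Smat M b a := by
  have key : ∀ x y : Fin d → k,
      (M.mulVec x) ⬝ᵥ (Jmat k n).mulVec (M.mulVec y)
        = x ⬝ᵥ (Mᵀ * (Jmat k n * M)).mulVec y := by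
    intro x y
    rw [Matrix.mulVec_mulVec, Matrix.dotProduct_mulVec, ← Matrix.vecMul_transpose,
      Matrix.vecMul_vecMul, ← Matrix.dotProduct_mulVec]
  constructor
  · intro h a b
    have hmem : ∀ c : Fin d, M.mulVec (Pi.single c 1) ∈ LinearMap.range M.mulVecLin :=
      fun c => ⟨Pi.single c 1, by rw [Matrix.mulVecLin_apply]⟩
    have h2 := h _ (hmem a) _ (hmem b)
    rw [key] at h2
    have h3 : (Pi.single a (1:k)) ⬝ᵥ (Mᵀ * (Jmat k n * M)).mulVec (Pi.single b 1)
        = (Mᵀ * (Jmat k n * M)) a b := by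
      simp [Matrix.mulVec, dotProduct, Pi.single_apply, mul_ite, ite_mul]
    rw [h3, entry_eq] at h2
    exact (sub_eq_zero.mp h2).symm
  · intro hsym u hu w hw
    obtain ⟨x, rfl⟩ := hu
    obtain ⟨y, rfl⟩ := hw
    rw [Matrix.mulVecLin_apply, Matrix.mulVecLin_apply, key]
    have hC : Mᵀ * (Jmat k n * M) = 0 := by
      ext a b; rw [entry_eq, hsym a b]; simp
    rw [hC]
    simp
lemma exists_good_rows (M : Matrix (Fin (2*n)) (Fin d) k) (hM : M.rank = d) :
    ∃ r : Fin d → Fin (2*n), StrictMono r ∧ IsUnit (M.submatrix r id).det := by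
  classical
  have h1 : Module.finrank k (Submodule.span k (Set.range M)) = d := by
    have h0 : Mᵀ.rank = Module.finrank k (Submodule.span k (Set.range M)) := by
      rw [Matrix.rank, Matrix.range_mulVecLin]; rfl
    rw [← h0, Matrix.rank_transpose, hM]
  obtain ⟨b, hbsub, hbspan, hbind⟩ := exists_linearIndependent k (Set.range M)
  have hbfin : b.Finite := LinearIndependent.set_finite_of_isNoetherian hbind
  haveI := hbfin.fintype
  have hcard : b.toFinset.card = d := by
    rw [← finrank_span_set_eq_card hbind, hbspan, h1]
  obtain ⟨f, hf⟩ : ∃ f : b → Fin (2*n), ∀ x : b, M (f x) = x :=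
    ⟨fun x => (hbsub x.2).choose, fun x => (hbsub x.2).choose_spec⟩
  have finj : Function.Injective f := fun x y h =>
    Subtype.ext (by rw [← hf x, ← hf y, h])
  set s : Finset (Fin (2*n)) := Finset.univ.map ⟨f, finj⟩ with hs_def
  have hs : s.card = d := by
    rw [hs_def, Finset.card_map, Finset.card_univ, ← Set.toFinset_card, hcard]
  refine ⟨fun j => s.orderEmbOfFin hs j, (s.orderEmbOfFin hs).strictMono, ?_⟩
  have hmem : ∀ j : Fin d, ∃ x : b, f x = s.orderEmbOfFin hs j := by
    intro j
    have h0 := s.orderEmbOfFin_mem hs j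
    obtain ⟨x, _, hx⟩ := Finset.mem_map.mp h0
    exact ⟨x, hx⟩
  have hrow : ∀ j : Fin d, M (s.orderEmbOfFin hs j) ∈ b := by
    intro j
    obtain ⟨x, hx⟩ := hmem j
    rw [← hx, hf x]; exact x.2
  set g : Fin d → b := fun j => ⟨M (s.orderEmbOfFin hs j), hrow j⟩ with hg_def
  have ginj : Function.Injective g := by
    intro j j' h
    obtain ⟨x, hx⟩ := hmem j
    obtain ⟨x', hx'⟩ := hmem j'
    have hxx : x = x' := by
      apply Subtype.ext
      have h2 : M (s.orderEmbOfFin hs j) = M (s.orderEmbOfFin hs j') := by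
        simpa [hg_def, Subtype.ext_iff] using h
      rw [← hf x, ← hf x', hx, hx']
      exact h2
    have : s.orderEmbOfFin hs j = s.orderEmbOfFin hs j' := by
      rw [← hx, ← hx', hxx]
    exact (s.orderEmbOfFin hs).injective this
  have hind : LinearIndependent k (Subtype.val ∘ g) := hbind.comp g ginj
  have hind2 : LinearIndependent k (fun j => (M.submatrix (fun j => s.orderEmbOfFin hs j) id) j) := by
    convert hind using 1
    funext j; rfl
  replace hind2 := Matrix.linearIndependent_rows_iff_isUnit.mp hind2
  exact (Matrix.isUnit_iff_isUnit_det _).mp hind2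
lemma colSkip_val (j1 j2 : Fin d) (c : Fin (d-2)) :
    (colSkip d j1 j2 c).1 =
      if c.1 < j1.1 then c.1 else if c.1 + 1 < j2.1 then c.1 + 1 else c.1 + 2 := by
  unfold colSkip; split_ifs <;> rfl

lemma colSkip_strictMono (j1 j2 : Fin d) (hj : j1 < j2) :
    StrictMono (colSkip d j1 j2) := by
  intro c c' h
  rw [Fin.lt_def] at h ⊢
  rw [colSkip_val, colSkip_val]
  have hj' : j1.1 < j2.1 := hj
  split_ifs <;> omega

lemma colSkip_ne (j1 j2 : Fin d) (hj : j1 < j2) (c : Fin (d-2)) :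
    colSkip d j1 j2 c ≠ j1 ∧ colSkip d j1 j2 c ≠ j2 := by
  have hj' : j1.1 < j2.1 := hj
  constructor <;>
  · rw [Fin.ne_iff_vne, colSkip_val]
    split_ifs <;> omega

lemma colSkip_surj (j1 j2 : Fin d) (hj : j1 < j2) (p : Fin d)
    (h1 : p ≠ j1) (h2 : p ≠ j2) : ∃ c, colSkip d j1 j2 c = p := by
  have hj' : j1.1 < j2.1 := hj
  have hj2 : j2.1 < d := j2.2
  have hp : p.1 < d := p.2
  have h1' : p.1 ≠ j1.1 := fun h => h1 (Fin.ext h)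
  have h2' : p.1 ≠ j2.1 := fun h => h2 (Fin.ext h)
  refine ⟨⟨if p.1 < j1.1 then p.1 else if p.1 < j2.1 then p.1 - 1 else p.1 - 2, by
    split_ifs <;> omega⟩, ?_⟩
  rw [Fin.ext_iff, colSkip_val]
  simp only
  split_ifs <;> omega

lemma submatrix_rowsFn (M : Matrix (Fin (2*n)) (Fin d) k) (i : Fin (d-2) → Fin (2*n))
    (t : Fin n) :
    M.submatrix (rowsFn d i t) id
      = matR M i (M ⟨t.1, by have := t.2; omega⟩) (M ⟨n + t.1, by have := t.2; omega⟩) := by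
  funext l c
  simp only [Matrix.submatrix_apply, id_eq, rowsFn, matR, Matrix.of_apply]
  split_ifs <;> rfl

lemma sumR_eq (hd : 3 ≤ d) (M : Matrix (Fin (2*n)) (Fin d) k) (i : Fin (d-2) → Fin (2*n)) :
    ∑ t : Fin n, (M.submatrix (rowsFn d i t) id).det
      = ∑ a : Fin d, ∑ b : Fin d, Smat M a b * Dco M i a b := by
  have e1 : ∀ t : Fin n, (M.submatrix (rowsFn d i t) id).det
      = ∑ a : Fin d, ∑ b : Fin d,
          M ⟨t.1, by have := t.2; omega⟩ a * M ⟨n + t.1, by have := t.2; omega⟩ b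
            * Dco M i a b := by
    intro t; rw [submatrix_rowsFn, det_matR_expand hd]
  simp only [e1]
  rw [Finset.sum_comm]
  refine Finset.sum_congr rfl fun a _ => ?_
  rw [Finset.sum_comm]
  refine Finset.sum_congr rfl fun b _ => ?_
  rw [Smat, Matrix.of_apply, Finset.sum_mul]

lemma sum_SD_zero (hd : 3 ≤ d) (M : Matrix (Fin (2*n)) (Fin d) k)
    (hsym : ∀ a b : Fin d, Smat M a b = Smat M b a) (i : Fin (d-2) → Fin (2*n)) :
    ∑ a : Fin d, ∑ b : Fin d, Smat M a b * Dco M i a b = 0 := by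
  rw [← Finset.sum_product']
  refine Finset.sum_involution (fun p _ => (p.2, p.1)) ?_ ?_ (fun p h => Finset.mem_univ _)
    (fun p h => rfl)
  · intro p _
    dsimp only
    rw [hsym p.2 p.1, show Dco M i p.2 p.1 = - Dco M i p.1 p.2 from matR_swap hd M i _ _]
    ring
  · intro p _ hf he
    apply hf
    have h1 : p.1 = p.2 := (congrArg Prod.fst he).symm
    rw [h1, show Dco M i p.2 p.2 = 0 from matR_diag hd M i _]
    ring

lemma sum4_comm (f : Fin d → Fin d → Fin d → Fin d → k) :
    ∑ a, ∑ b, ∑ p, ∑ q, f a b p q = ∑ p, ∑ q, ∑ a, ∑ b, f a b p q := by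
  trans ∑ a, ∑ p, ∑ b, ∑ q, f a b p q
  · exact Finset.sum_congr rfl fun a _ => Finset.sum_comm
  trans ∑ p, ∑ a, ∑ b, ∑ q, f a b p q
  · exact Finset.sum_comm
  refine Finset.sum_congr rfl fun p _ => ?_
  trans ∑ a, ∑ q, ∑ b, f a b p q
  · exact Finset.sum_congr rfl fun a _ => Finset.sum_comm
  exact Finset.sum_comm

lemma quad_exchange (Q T D : Fin d → Fin d → k) :
    ∑ a, ∑ b, (∑ p, ∑ q, Q p a * T p q * Q q b) * D a b
      = ∑ p, ∑ q, T p q * (∑ a, ∑ b, Q p a * Q q b * D a b) := by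
  have e1 : ∀ a b : Fin d, (∑ p, ∑ q, Q p a * T p q * Q q b) * D a b
      = ∑ p, ∑ q, Q p a * T p q * Q q b * D a b := by
    intro a b; rw [Finset.sum_mul]
    exact Finset.sum_congr rfl fun p _ => by rw [Finset.sum_mul]
  have e2 : ∀ p q : Fin d, T p q * (∑ a, ∑ b, Q p a * Q q b * D a b)
      = ∑ a, ∑ b, Q p a * T p q * Q q b * D a b := by
    intro p q; rw [Finset.mul_sum]
    refine Finset.sum_congr rfl fun a _ => ?_
    rw [Finset.mul_sum]
    exact Finset.sum_congr rfl fun b _ => by ring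
  simp only [e1, e2]
  exact sum4_comm _

end StmtAux

/-- the `d ≥ 3` case of Theorem 4.4: for `3 ≤ d ≤ n` and a `2n×d` matrix
`M` of rank `d` over an algebraically closed field, the column span `U` of `M` is
isotropic (i.e. `U ∈ Sp_{2n}(k)/P_d ⊆ G_{d,2n}`) iff for every strictly increasing
`(d−2)`-tuple `i` of rows, `Σ_{t=1}^n det R(i,t) = 0`, where `R(i,t)` is the `d×d`
matrix whose rows are rows `i_1,…,i_{d−2}, t, n+t` of `M` in order. -/
theorem stmt6 {k : Type*} [Field k] [IsAlgClosed k] (n d : ℕ) (hd : 3 ≤ d) (hdn : d ≤ n)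
    (M : Matrix (Fin (2*n)) (Fin d) k) (hM : M.rank = d) :
    IsIsotropic k n (LinearMap.range M.mulVecLin) ↔
      ∀ i : Fin (d-2) → Fin (2*n), StrictMono i →
        ∑ t : Fin n, (M.submatrix (rowsFn d i t) id).det = 0 := by
  
  classical
  rw [iso_iff]
  constructor
  · intro hsym i _
    rw [sumR_eq hd M i]
    exact sum_SD_zero hd M hsym i
  · intro hyp a0 b0
    obtain ⟨r, hrmono, hrunit⟩ := exists_good_rows M hM
    set Q : Matrix (Fin d) (Fin d) k := M.submatrix r id with hQdef
    have hdet : Q.det ≠ 0 := hrunit.ne_zero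
    set T : Matrix (Fin d) (Fin d) k := Q⁻¹ᵀ * Smat M * Q⁻¹ with hTdef
    have h1 : Q⁻¹ * Q = 1 := Matrix.nonsing_inv_mul Q hrunit
    have hfact : Qᵀ * T * Q = Smat M := by
      rw [hTdef]
      have : Qᵀ * (Q⁻¹ᵀ * Smat M * Q⁻¹) * Q = (Qᵀ * Q⁻¹ᵀ) * Smat M * (Q⁻¹ * Q) := by
        noncomm_ring
      rw [this, ← Matrix.transpose_mul, h1, Matrix.transpose_one]
      simp
    have hentry : ∀ a b : Fin d, Smat M a b = ∑ p, ∑ q, Q p a * T p q * Q q b := by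
      intro a b
      rw [← hfact, Matrix.mul_apply]
      have e1 : ∀ q : Fin d, (Qᵀ * T) a q * Q q b = ∑ p, Q p a * T p q * Q q b := by
        intro q
        rw [Matrix.mul_apply, Finset.sum_mul]
        exact Finset.sum_congr rfl fun p _ => by rw [Matrix.transpose_apply]
      simp only [e1]
      exact Finset.sum_comm
    have hTsym : ∀ p q : Fin d, p < q → T p q = T q p := by
      intro p q hpq
      set i : Fin (d-2) → Fin (2*n) := fun c => r (colSkip d p q c) with hidef
      have himono : StrictMono i := hrmono.comp (colSkip_strictMono p q hpq)
      have h0 := hyp i himono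
      rw [sumR_eq hd M i] at h0
      simp only [hentry] at h0
      have hqe := quad_exchange (k := k) (d := d) (fun p a => Q p a) (fun p q => T p q)
        (fun a b => Dco M i a b)
      rw [hqe] at h0
      have hG : ∀ p' q' : Fin d, ∑ a, ∑ b, Q p' a * Q q' b * Dco M i a b
          = (matR M i (M (r p')) (M (r q'))).det :=
        fun p' q' => (det_matR_expand hd M i _ _).symm
      simp only [hG] at h0
      rw [← Finset.sum_product'] at h0
      have hGzero : ∀ x : Fin d × Fin d,
          x ∈ (Finset.univ ×ˢ Finset.univ : Finset (Fin d × Fin d)) →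
          x ∉ ({(p,q),(q,p)} : Finset (Fin d × Fin d)) →
          T x.1 x.2 * (matR M i (M (r x.1)) (M (r x.2))).det = 0 := by
        intro x _ hx
        simp only [Finset.mem_insert, Finset.mem_singleton] at hx
        push_neg at hx
        obtain ⟨hx1, hx2⟩ := hx
        by_cases h12 : x.1 = x.2
        · rw [h12, matR_diag hd]; ring
        have hzero : (matR M i (M (r x.1)) (M (r x.2))).det = 0 := by
          by_cases hp1 : x.1 ≠ p ∧ x.1 ≠ q
          · obtain ⟨c, hc⟩ := colSkip_surj p q hpq x.1 hp1.1 hp1.2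
            refine Matrix.det_zero_of_row_eq
              (i := ⟨c.1, by have := c.2; omega⟩) (j := ⟨d-2, by omega⟩) ?_ ?_
            · rw [Fin.ne_iff_vne]; simp; have := c.2; omega
            · rw [matR_rowlt, matR_row2 hd]
              rw [hidef]; simp only; rw [hc]
          · have hp2 : x.2 ≠ p ∧ x.2 ≠ q := by
              push_neg at hp1
              constructor
              · intro he
                rcases Classical.em (x.1 = p) with h | h
                · exact h12 (h.trans he.symm)
                · exact hx2 (Prod.ext (hp1 h) he)
              · intro he
                rcases Classical.em (x.1 = p) with h | h
                · exact hx1 (Prod.ext h he)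
                · exact h12 ((hp1 h).trans he.symm)
            obtain ⟨c, hc⟩ := colSkip_surj p q hpq x.2 hp2.1 hp2.2
            refine Matrix.det_zero_of_row_eq
              (i := ⟨c.1, by have := c.2; omega⟩) (j := ⟨d-1, by omega⟩) ?_ ?_
            · rw [Fin.ne_iff_vne]; simp; have := c.2; omega
            · rw [matR_rowlt, matR_row1 hd]
              rw [hidef]; simp only; rw [hc]
        rw [hzero]; ring
      have hsubset : ({(p,q),(q,p)} : Finset (Fin d × Fin d)) ⊆ Finset.univ ×ˢ Finset.univ := by
        intro x _; simp [Finset.mem_product]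
      rw [← Finset.sum_subset hsubset hGzero] at h0
      have hpairne : ((p,q) : Fin d × Fin d) ≠ (q,p) := by
        intro he; exact hpq.ne (congrArg Prod.fst he)
      rw [Finset.sum_pair hpairne] at h0
      have hswap : (matR M i (M (r q)) (M (r p))).det
          = - (matR M i (M (r p)) (M (r q))).det := matR_swap hd M i _ _
      rw [hswap] at h0
      -- nonvanishing
      have hGpq : (matR M i (M (r p)) (M (r q))).det ≠ 0 := by
        set piF : Fin d → Fin d := fun l =>
          if h : l.1 < d-2 then colSkip d p q ⟨l.1, h⟩ else if l.1 = d-2 then p else q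
          with hpiF
        have hinj : Function.Injective piF := by
          intro l l' he
          have hl := l.2; have hl' := l'.2
          rw [hpiF] at he; simp only at he
          rcases lt_trichotomy l.1 (d-2) with h | h | h <;>
            rcases lt_trichotomy l'.1 (d-2) with h' | h' | h'
          · rw [dif_pos h, dif_pos h'] at he
            have := (colSkip_strictMono p q hpq).injective he
            rw [Fin.ext_iff] at this ⊢; simpa using this
          · rw [dif_pos h, dif_neg (by omega), if_pos h'] at he
            exact absurd he (colSkip_ne p q hpq _).1
          · rw [dif_pos h, dif_neg (by omega), if_neg (by omega)] at he
            exact absurd he (colSkip_ne p q hpq _).2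
          · rw [dif_neg (by omega), if_pos h, dif_pos h'] at he
            exact absurd he.symm (colSkip_ne p q hpq _).1
          · exact Fin.ext (h.trans h'.symm)
          · rw [dif_neg (by omega), if_pos h, dif_neg (by omega), if_neg (by omega)] at he
            exact absurd he hpq.ne
          · rw [dif_neg (by omega), if_neg (by omega), dif_pos h'] at he
            exact absurd he.symm (colSkip_ne p q hpq _).2
          · rw [dif_neg (by omega), if_neg (by omega), dif_neg (by omega), if_pos h'] at he
            exact absurd he.symm hpq.ne
          · exact Fin.ext (by omega)
        have hbij : Function.Bijective piF := Finite.injective_iff_bijective.mp hinj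
        set σ : Equiv.Perm (Fin d) := Equiv.ofBijective piF hbij with hσ
        have hmat : matR M i (M (r p)) (M (r q)) = Q.submatrix (⇑σ) id := by
          funext l c
          have : Q.submatrix (⇑σ) id l c = M (r (piF l)) c := rfl
          rw [this, hpiF]
          simp only
          rcases lt_trichotomy l.1 (d-2) with h | h | h
          · rw [dif_pos h]
            have hrow := congrFun (matR_rowlt M i (M (r p)) (M (r q)) ⟨l.1, h⟩) c
            have hl : (⟨(⟨l.1, h⟩ : Fin (d-2)).1, by have := l.2; omega⟩ : Fin d) = l :=
              Fin.ext rfl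
            rw [hl] at hrow
            rw [hrow, hidef]
          · rw [dif_neg (by omega), if_pos h]
            have hl : l = (⟨d-2, by omega⟩ : Fin d) := Fin.ext h
            rw [hl]
            rw [congrFun (matR_row2 hd M i (M (r p)) (M (r q))) c]
          · rw [dif_neg (by omega), if_neg (by omega)]
            have hl : l = (⟨d-1, by omega⟩ : Fin d) := by
              have := l.2; rw [Fin.ext_iff]; simp; omega
            rw [hl]
            rw [congrFun (matR_row1 hd M i (M (r p)) (M (r q))) c]
        rw [hmat, Matrix.det_permute]
        rcases Int.units_eq_one_or (Equiv.Perm.sign σ) with h | h <;> rw [h] <;>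
          simpa using hdet
      have hfinal : (T p q - T q p) * (matR M i (M (r p)) (M (r q))).det = 0 := by
        rw [sub_mul]; rw [← h0]; ring
      rcases mul_eq_zero.mp hfinal with h | h
      · exact sub_eq_zero.mp h
      · exact absurd h hGpq
    have hTsym' : ∀ p q : Fin d, T p q = T q p := by
      intro p q
      rcases lt_trichotomy p q with h | h | h
      · exact hTsym p q h
      · rw [h]
      · exact (hTsym q p h).symm
    rw [hentry a0 b0, hentry b0 a0]
    rw [Finset.sum_comm]
    refine Finset.sum_congr rfl fun p _ => Finset.sum_congr rfl fun q _ => ?_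
    rw [hTsym' q p]
    ring
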